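/- arXiv:2011.08281 — 2 statements merged into one kernel-verified Lean document; each statement's English description precedes it below -/
import Mathlib

section
/- Let à be an m×n real matrix, (B_h)_{h≥1} a sequence of b×m real matrices, (c_h)_{h≥1} a sequence of real step sizes, and let sig denote entrywise application of the logistic sigmoid sig(t) = 1/(1 + exp(−t)). Define the SGD iterates by x_h = x_{h−1} − c_h Ãᵀ B_hᵀ sig(B_h à x_{h−1}). Then for every base index t ≥ 0 and every j ≥ 1, the sampled matrix–vector product satisfies the unrolled identity B_{t+j} à x_{t+j−1} = B_{t+j} à x_t − Σ_{i=1}^{j−1} c_{t+i} (B_{t+j} à Ãᵀ B_{t+i}ᵀ) sig(B_{t+i} à x_{t+i−1}); that is, each sampled product can be recovered from the single product B_{t+j} à x_t and the Gram blocks B_{t+j} à Ãᵀ B_{t+i}ᵀ, without forming the intermediate iterates x_{t+1}, ..., x_{t+j−1}. -/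
/-- The logistic sigmoid. -/
noncomputable def sig (t : ℝ) : ℝ := 1 / (1 + Real.exp (-t))

lemma sgd_unrolled_iterate (m n b : ℕ)
    (Atil : Matrix (Fin m) (Fin n) ℝ)
    (B : ℕ → Matrix (Fin b) (Fin m) ℝ) (c : ℕ → ℝ) (x : ℕ → Fin n → ℝ)
    (hrec : ∀ h : ℕ, 1 ≤ h →
      x h = x (h - 1) -
        c h • Atil.transpose.mulVec ((B h).transpose.mulVec
          (fun k => sig ((B h * Atil).mulVec (x (h - 1)) k)))) :
    ∀ (t j : ℕ),
      x (t + j) = x t -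
        ∑ i ∈ Finset.Icc 1 j,
          c (t + i) • Atil.transpose.mulVec ((B (t + i)).transpose.mulVec
            (fun k => sig ((B (t + i) * Atil).mulVec (x (t + i - 1)) k))) := by
  intro t j
  induction j with
  | zero => simp
  | succ j ih =>
    have h1 : 1 ≤ t + (j + 1) := by omega
    have h2 : t + (j + 1) - 1 = t + j := by omega
    have := hrec (t + (j + 1)) h1
    rw [h2] at this
    rw [this]
    nth_rewrite 1 [ih]
    have h3 : t + j = t + (j + 1) - 1 := by omega
    rw [Finset.sum_Icc_succ_top (by omega : 1 ≤ j + 1), h3, sub_sub]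

/-- Unrolling the SGD recurrence for logistic regression: the sampled product
`B_{t+j} Ã x_{t+j−1}` can be recovered from `B_{t+j} Ã x_t` and the Gram
blocks `B_{t+j} Ã Ãᵀ B_{t+i}ᵀ`, without forming the intermediate iterates. -/
theorem sgd_unrolled_sampled_product (m n b : ℕ)
    (Atil : Matrix (Fin m) (Fin n) ℝ)
    (B : ℕ → Matrix (Fin b) (Fin m) ℝ) (c : ℕ → ℝ) (x : ℕ → Fin n → ℝ)
    (hrec : ∀ h : ℕ, 1 ≤ h →
      x h = x (h - 1) -
        c h • Atil.transpose.mulVec ((B h).transpose.mulVec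
          (fun k => sig ((B h * Atil).mulVec (x (h - 1)) k)))) :
    ∀ (t : ℕ) (j : ℕ), 1 ≤ j →
      (B (t + j) * Atil).mulVec (x (t + j - 1)) =
        (B (t + j) * Atil).mulVec (x t) -
          ∑ i ∈ Finset.Icc 1 (j - 1),
            c (t + i) •
              (B (t + j) * Atil * Atil.transpose * (B (t + i)).transpose).mulVec
                (fun k => sig ((B (t + i) * Atil).mulVec (x (t + i - 1)) k)) := by
  intro t j hj
  have key := sgd_unrolled_iterate m n b Atil B c x hrec t (j - 1)
  have hrw : t + j - 1 = t + (j - 1) := by omega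
  rw [hrw, key, Matrix.mulVec_sub]
  congr 1
  rw [← Matrix.mulVecLin_apply, map_sum]
  apply Finset.sum_congr rfl
  intro i hi
  rw [map_smul, Matrix.mulVecLin_apply]
  congr 1
  rw [Matrix.mulVec_mulVec, Matrix.mulVec_mulVec, Matrix.mul_assoc, Matrix.mul_assoc]
end

section
/- Let à be an m×n real matrix, B_1, ..., B_s be b×m real matrices, c_1, ..., c_s real step sizes, x_0 an n-dimensional vector, and let sig denote entrywise application of the logistic sigmoid sig(t) = 1/(1 + exp(−t)). Define the CA-SGD quantities: q_j = B_j à x_0 − Σ_{i=1}^{j−1} c_i (B_j à Ãᵀ B_iᵀ) g_i and g_j = sig(q_j) for j = 1, ..., s (so g_1 = sig(B_1 à x_0)), and set y = x_0 − Σ_{j=1}^{s} c_j Ãᵀ B_jᵀ g_j. Also define the SGD iterates x_j = x_{j−1} − c_j Ãᵀ B_jᵀ sig(B_j à x_{j−1}) for j = 1, ..., s. Then g_j = sig(B_j à x_{j−1}) for every j, and y = x_s; that is, the CA-SGD recurrence computed from the initial products B_j à x_0 and the Gram blocks B_j à Ãᵀ B_iᵀ produces exactly the same result as s consecutive SGD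 iterations. -/
/-- Correctness of CA-SGD: the quantities `q_j`, `g_j` computed from the
initial products `B_j Ã x₀` and the Gram blocks `B_j Ã Ãᵀ B_iᵀ` satisfy
`g_j = sig(B_j Ã x_{j−1})`, and the CA-SGD output `y` equals the result `x_s`
of `s` consecutive SGD iterations. -/
theorem casgd_correct (m n b s : ℕ)
    (Atil : Matrix (Fin m) (Fin n) ℝ)
    (B : ℕ → Matrix (Fin b) (Fin m) ℝ) (c : ℕ → ℝ)
    (x0 : Fin n → ℝ) (q g : ℕ → Fin b → ℝ) (y : Fin n → ℝ) (x : ℕ → Fin n → ℝ)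
    (hq : ∀ j : ℕ, 1 ≤ j → j ≤ s →
      q j = (B j * Atil).mulVec x0 -
        ∑ i ∈ Finset.Icc 1 (j - 1),
          c i • (B j * Atil * Atil.transpose * (B i).transpose).mulVec (g i))
    (hg : ∀ j : ℕ, 1 ≤ j → j ≤ s → g j = fun k => sig (q j k))
    (hy : y = x0 - ∑ j ∈ Finset.Icc 1 s,
      c j • Atil.transpose.mulVec ((B j).transpose.mulVec (g j)))
    (hx0 : x 0 = x0)
    (hx : ∀ j : ℕ, 1 ≤ j → j ≤ s →
      x j = x (j - 1) -
        c j • Atil.transpose.mulVec ((B j).transpose.mulVec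
          (fun k => sig ((B j * Atil).mulVec (x (j - 1)) k)))) :
    (∀ j : ℕ, 1 ≤ j → j ≤ s →
      g j = fun k => sig ((B j * Atil).mulVec (x (j - 1)) k)) ∧ y = x s := by
  have key : ∀ j : ℕ, j ≤ s →
      (1 ≤ j → g j = fun k => sig ((B j * Atil).mulVec (x (j - 1)) k)) ∧
      x j = x0 - ∑ i ∈ Finset.Icc 1 j,
        c i • Atil.transpose.mulVec ((B i).transpose.mulVec (g i)) := by
    intro j
    induction j with
    | zero => intro _; exact ⟨fun h => absurd h (by norm_num), by simp [hx0]⟩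
    | succ j ih =>
      intro hjs
      obtain ⟨-, ihx⟩ := ih (Nat.le_of_succ_le hjs)
      have h1 : 1 ≤ j + 1 := Nat.le_add_left 1 j
      have hgj : g (j + 1) = fun k => sig ((B (j + 1) * Atil).mulVec (x j) k) := by
        rw [hg (j + 1) h1 hjs, hq (j + 1) h1 hjs]
        have : (B (j + 1) * Atil).mulVec (x j) =
            (B (j + 1) * Atil).mulVec x0 -
              ∑ i ∈ Finset.Icc 1 (j + 1 - 1),
                c i • (B (j + 1) * Atil * Atil.transpose * (B i).transpose).mulVec (g i) := by
          simp only [Nat.add_sub_cancel, ihx, Matrix.mulVec_sub]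
          congr 1
          rw [show (B (j + 1) * Atil).mulVec
              (∑ i ∈ Finset.Icc 1 j, c i • Atil.transpose.mulVec ((B i).transpose.mulVec (g i)))
            = ∑ i ∈ Finset.Icc 1 j, (B (j + 1) * Atil).mulVec
                (c i • Atil.transpose.mulVec ((B i).transpose.mulVec (g i))) from by
            have h := map_sum (B (j + 1) * Atil).mulVecLin
              (fun i => c i • Atil.transpose.mulVec ((B i).transpose.mulVec (g i)))
              (Finset.Icc 1 j)
            simpa only [Matrix.mulVecLin_apply] using h]
          refine Finset.sum_congr rfl fun i _ => ?_
          simp only [Matrix.mulVec_smul, Matrix.mulVec_mulVec, Matrix.mul_assoc]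
        rw [this]
      refine ⟨fun _ => by simpa using hgj, ?_⟩
      rw [hx (j + 1) h1 hjs, Nat.add_sub_cancel, ← hgj, ihx,
        Finset.sum_Icc_succ_top h1]
      abel
  obtain ⟨hgg, hxs⟩ := key s le_rfl
  refine ⟨fun j h1 h2 => ?_, ?_⟩
  · exact (key j h2).1 h1
  · rw [hy, hxs]
end
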